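/- arXiv:1404.3828 — 4 statements merged into one kernel-verified Lean document; each statement's English description precedes it below -/
import Mathlib

section
/- In the PBM-GSP mechanism (full-information setting), for every advertiser i, every keyword s, and every bid profile b in which b_i^s > v_i^s, let b̂_i denote b_i with its s-coordinate replaced by v_i^s. Then u_i(b̂_i, b_{-i}) ≥ u_i(b_i, b_{-i}); that is, bidding any value strictly above the expected keyword value v_i^s on a keyword is weakly dominated by bidding exactly v_i^s on that keyword. -/
open Finset MeasureTheory

noncomputable section

namespace PBM

attribute [local instance] Classical.propDecidable

/-- 0-indexed rank of advertiser `i` among the advertisers with a positive bid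
(higher bid first, ties broken by smaller index). -/
def rank {n : ℕ} (bs : Fin n → ℝ) (i : Fin n) : ℕ :=
  (Finset.univ.filter fun j => 0 < bs j ∧ (bs i < bs j ∨ (bs j = bs i ∧ j < i))).card

/-- 0-indexed rank of `i` among all coordinates of `x` (decreasing, ties by index). -/
def rankAll {n : ℕ} (x : Fin n → ℝ) (i : Fin n) : ℕ :=
  (Finset.univ.filter fun j => x i < x j ∨ (x j = x i ∧ j < i)).card

/-- click probability of the slot obtained by `i` (0 if `i` places no positive bid). -/
def slotW {n : ℕ} (w : ℕ → ℝ) (bs : Fin n → ℝ) (i : Fin n) : ℝ :=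
  if 0 < bs i then w (rank bs i) else 0

/-- GSP per-click payment of `i`: the bid of the advertiser ranked right below `i`
(0 if there is none). -/
def pay {n : ℕ} (bs : Fin n → ℝ) (i : Fin n) : ℝ :=
  ∑ j ∈ Finset.univ.filter (fun j => 0 < bs j ∧ rank bs j = rank bs i + 1), bs j

/-- utility of bidder `i` in the single-keyword GSP game with values `vv`. -/
def gspUtil {n : ℕ} (w : ℕ → ℝ) (vv : Fin n → ℝ) (bs : Fin n → ℝ) (i : Fin n) : ℝ :=
  slotW w bs i * (vv i - pay bs i)

variable {Q S : Type*} [Fintype Q] [Fintype S]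

/-- expected value of keyword `s` for an advertiser with per-query valuations `vq`. -/
def kwVal (P : Q → ℝ) (pi : Q → S → ℝ) (vq : Q → ℝ) (s : S) : ℝ :=
  (∑ q, pi q s * vq q * P q) / (∑ q, pi q s * P q)

/-- probability mass of keyword `s`. -/
def mass (P : Q → ℝ) (pi : Q → S → ℝ) (s : S) : ℝ := ∑ q, pi q s * P q

/-- expected utility of advertiser `i` in PBM-GSP. -/
def util {n : ℕ} (P : Q → ℝ) (pi : Q → S → ℝ) (w : ℕ → ℝ)
    (v : Fin n → Q → ℝ) (b : Fin n → S → ℝ) (i : Fin n) : ℝ :=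
  ∑ q, P q * ∑ s, pi q s *
    (slotW w (fun j => b j s) i * (v i q - pay (fun j => b j s) i))

/-- social welfare of bid profile `b` in PBM-GSP. -/
def SW {n : ℕ} (P : Q → ℝ) (pi : Q → S → ℝ) (w : ℕ → ℝ)
    (v : Fin n → Q → ℝ) (b : Fin n → S → ℝ) : ℝ :=
  ∑ q, P q * ∑ s, pi q s * ∑ i, slotW w (fun j => b j s) i * v i q

/-- optimal social welfare. -/
def SWopt {n : ℕ} (P : Q → ℝ) (w : ℕ → ℝ) (v : Fin n → Q → ℝ) : ℝ :=
  ∑ q, P q * ∑ i, w (rankAll (fun j => v j q) i) * v i q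

/-- welfare of the truthful keyword-bid profile `𝔳` (each advertiser bids his
expected keyword value on every keyword, no `κ` constraint). -/
def SWtruth {n : ℕ} (P : Q → ℝ) (pi : Q → S → ℝ) (w : ℕ → ℝ)
    (v : Fin n → Q → ℝ) : ℝ :=
  ∑ q, P q * ∑ s, pi q s *
    ∑ i, w (rankAll (fun j => kwVal P pi (v j) s) i) * kwVal P pi (v i) s

/-- a bid vector is valid if it is nonnegative and positive on at most `κ` keywords. -/
def ValidBid (κ : ℕ) (bi : S → ℝ) : Prop :=
  (∀ s, 0 ≤ bi s) ∧ ((Finset.univ.filter fun s => 0 < bi s).card ≤ κ)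

/-- a bid profile is conservative if everybody bids at most his expected keyword value. -/
def Conservative {n : ℕ} (P : Q → ℝ) (pi : Q → S → ℝ)
    (v : Fin n → Q → ℝ) (b : Fin n → S → ℝ) : Prop :=
  ∀ i s, b i s ≤ kwVal P pi (v i) s

/-- `β`-keyword-level expressiveness for valuation profile `v`. -/
def KLExpressive {n : ℕ} (pi : Q → S → ℝ) (v : Fin n → Q → ℝ) (κ : ℕ) (β : ℝ) : Prop :=
  ∀ i : Fin n,
    β * ((Finset.univ.filter fun s : S => ∃ q, 0 < pi q s ∧ 0 < v i q).card : ℝ) ≤ (κ : ℝ)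

/-- expected utility of advertiser `i` in PBM-GSP with reserve price vector `r`. -/
def utilR {n : ℕ} (P : Q → ℝ) (pi : Q → S → ℝ) (w : ℕ → ℝ) (r : S → ℝ)
    (v : Fin n → Q → ℝ) (b : Fin n → S → ℝ) (i : Fin n) : ℝ :=
  ∑ q, P q * ∑ s, pi q s *
    (if 0 < b i s ∧ r s ≤ b i s then
       w (rank (fun j => b j s) i) * (v i q - max (r s) (pay (fun j => b j s) i))
     else 0)

/-- revenue of PBM-GSP with reserve price vector `r`. -/
def revenue {n : ℕ} (P : Q → ℝ) (pi : Q → S → ℝ) (w : ℕ → ℝ) (r : S → ℝ)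
    (b : Fin n → S → ℝ) : ℝ :=
  ∑ q, P q * ∑ s, pi q s * ∑ i,
    (if 0 < b i s ∧ r s ≤ b i s then
       w (rank (fun j => b j s) i) * max (r s) (pay (fun j => b j s) i)
     else 0)

/-- reserve-restricted social welfare of PBM-GSP with reserve price vector `r`. -/
def SWres {n : ℕ} (P : Q → ℝ) (pi : Q → S → ℝ) (w : ℕ → ℝ) (r : S → ℝ)
    (v : Fin n → Q → ℝ) (b : Fin n → S → ℝ) : ℝ :=
  ∑ q, P q * ∑ s, pi q s * ∑ i,
    (if 0 < b i s ∧ r s ≤ b i s then w (rank (fun j => b j s) i) * v i q else 0)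

/-- marginal CDF on keyword `s` of a distribution `T` of keyword-valuation vectors. -/
def cdfT (T : Measure (S → ℝ)) (s : S) (x : ℝ) : ℝ :=
  ((T.map fun f => f s) (Set.Iic x)).toReal

/-- the virtual value function `φ_s(x) = x - (1 - T_s(x))/t_s(x)`. -/
def virt (T : Measure (S → ℝ)) (td : S → ℝ → ℝ) (s : S) (x : ℝ) : ℝ :=
  x - (1 - cdfT T s x) / td s x

/-- `td s` is the density of the marginal of `T` on keyword `s`. -/
def HasDensity (T : Measure (S → ℝ)) (td : S → ℝ → ℝ) : Prop :=
  ∀ s : S, T.map (fun f => f s)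
    = MeasureTheory.volume.withDensity (fun x => ENNReal.ofReal (td s x))

/-- `r` is the vector of Myerson reserve prices. -/
def MyersonReserve (T : Measure (S → ℝ)) (td : S → ℝ → ℝ) (r : S → ℝ) : Prop :=
  ∀ s : S, 0 ≤ r s ∧ virt T td s (r s) = 0

/-- `T` is an MHR distribution with bounded derivative `η`. -/
def MHRBounded (T : Measure (S → ℝ)) (td : S → ℝ → ℝ) (r : S → ℝ) (η : ℝ) : Prop :=
  ∀ s : S, (∀ x : ℝ, 0 ≤ x → DifferentiableAt ℝ (virt T td s) x) ∧
    (∀ x : ℝ, 0 ≤ x → 1 ≤ deriv (virt T td s) x) ∧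
    (∀ x : ℝ, r s ≤ x → deriv (virt T td s) x ≤ η)

/-- `T` has a monotone hazard rate. -/
def MHRhazard (T : Measure (S → ℝ)) (td : S → ℝ → ℝ) : Prop :=
  ∀ s : S, MonotoneOn (fun x => td s x / (1 - cdfT T s x))
    {x : ℝ | 0 ≤ x ∧ cdfT T s x < 1}

/-- expected revenue (per valuation profile) of PBM-VCG with reserve prices, via
Myerson's lemma: virtual-value surplus of the welfare-maximizing allocation. -/
def revVCG {n : ℕ} (P : Q → ℝ) (pi : Q → S → ℝ) (w : ℕ → ℝ)
    (T : Measure (S → ℝ)) (td : S → ℝ → ℝ) (v : Fin n → Q → ℝ) : ℝ :=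
  ∑ s, mass P pi s * ∑ i, w (rankAll (fun j => kwVal P pi (v j) s) i) *
    (if 0 < virt T td s (kwVal P pi (v i) s) then virt T td s (kwVal P pi (v i) s) else 0)

end PBM

namespace PBMAux
open PBM

attribute [local instance] Classical.propDecidable

variable {n : ℕ}

/-- `j` is ranked strictly above `k` (both GSP-relevant only when bids positive). -/
def Pred (bs : Fin n → ℝ) (j k : Fin n) : Prop :=
  0 < bs j ∧ (bs k < bs j ∨ (bs j = bs k ∧ j < k))

lemma pred_irrefl (bs : Fin n → ℝ) (j : Fin n) : ¬ Pred bs j j := by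
  rintro ⟨-, h | ⟨-, h⟩⟩
  · exact lt_irrefl _ h
  · exact lt_irrefl _ h

lemma pred_trans {bs : Fin n → ℝ} {a b c : Fin n}
    (h1 : Pred bs a b) (h2 : Pred bs b c) : Pred bs a c := by
  obtain ⟨ha, h1⟩ := h1
  obtain ⟨hb, h2⟩ := h2
  refine ⟨ha, ?_⟩
  rcases h1 with h1 | ⟨e1, l1⟩ <;> rcases h2 with h2 | ⟨e2, l2⟩
  · exact Or.inl (by linarith)
  · exact Or.inl (by linarith)
  · exact Or.inl (by linarith)
  · exact Or.inr ⟨by linarith, l1.trans l2⟩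

lemma pred_asymm {bs : Fin n → ℝ} {j k : Fin n}
    (h1 : Pred bs j k) (h2 : Pred bs k j) : False := by
  obtain ⟨-, h1⟩ := h1
  obtain ⟨-, h2⟩ := h2
  rcases h1 with h1 | ⟨e1, l1⟩ <;> rcases h2 with h2 | ⟨e2, l2⟩
  · linarith
  · linarith
  · linarith
  · exact absurd (l1.trans l2) (lt_irrefl _)

lemma pred_total {bs : Fin n → ℝ} {j k : Fin n} (hj : 0 < bs j) (hk : 0 < bs k)
    (hne : j ≠ k) : Pred bs j k ∨ Pred bs k j := by
  rcases lt_trichotomy (bs j) (bs k) with h | h | h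
  · exact Or.inr ⟨hk, Or.inl h⟩
  · rcases hne.lt_or_gt with hl | hl
    · exact Or.inl ⟨hj, Or.inr ⟨h, hl⟩⟩
    · exact Or.inr ⟨hk, Or.inr ⟨h.symm, hl⟩⟩
  · exact Or.inl ⟨hj, Or.inl h⟩

lemma rank_eq (bs : Fin n → ℝ) (k : Fin n) :
    rank bs k = (Finset.univ.filter fun j => Pred bs j k).card := by
  unfold rank
  congr 1
  exact Finset.filter_congr fun j _ => Iff.rfl

lemma rank_lt {bs : Fin n → ℝ} {j k : Fin n} (h : Pred bs j k) :
    rank bs j < rank bs k := by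
  have hj : j ∉ Finset.univ.filter fun m => Pred bs m j := by
    simp [pred_irrefl]
  have hsub : insert j (Finset.univ.filter fun m => Pred bs m j)
      ⊆ Finset.univ.filter fun m => Pred bs m k := by
    intro m hm
    simp only [Finset.mem_insert, Finset.mem_filter, Finset.mem_univ, true_and] at *
    rcases hm with rfl | hm
    · exact h
    · exact pred_trans hm h
  have hc := Finset.card_le_card hsub
  rw [Finset.card_insert_of_notMem hj] at hc
  rw [rank_eq bs j, rank_eq bs k]
  omega

lemma rank_injOn {bs : Fin n → ℝ} {j k : Fin n} (hj : 0 < bs j) (hk : 0 < bs k)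
    (hr : rank bs j = rank bs k) : j = k := by
  by_contra hne
  rcases pred_total hj hk hne with h | h <;> (have := rank_lt h; omega)

lemma pay_nonneg (bs : Fin n → ℝ) (i : Fin n) : 0 ≤ pay bs i :=
  Finset.sum_nonneg fun j hj => le_of_lt (Finset.mem_filter.mp hj).2.1

lemma pay_le {bs : Fin n → ℝ} {i : Fin n} (hi : 0 < bs i) : pay bs i ≤ bs i := by
  rcases (Finset.univ.filter fun j =>
      0 < bs j ∧ rank bs j = rank bs i + 1).eq_empty_or_nonempty with he | ⟨m, hm⟩
  · rw [pay, he, Finset.sum_empty]; exact hi.le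
  · obtain ⟨hm0, hmr⟩ := (Finset.mem_filter.mp hm).2
    have hD : (Finset.univ.filter fun j => 0 < bs j ∧ rank bs j = rank bs i + 1) = {m} := by
      ext k
      simp only [Finset.mem_filter, Finset.mem_univ, true_and, Finset.mem_singleton]
      constructor
      · rintro ⟨hk0, hkr⟩
        exact rank_injOn hk0 hm0 (by omega)
      · rintro rfl; exact ⟨hm0, hmr⟩
    rw [pay, hD, Finset.sum_singleton]
    by_contra hcon
    push_neg at hcon
    have : Pred bs m i := ⟨hm0, Or.inl hcon⟩
    have := rank_lt this
    omega

lemma pred_update {bs : Fin n → ℝ} {i j : Fin n} {V : ℝ} (hlt : V < bs i)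
    (hj : Pred bs j i) : Pred (Function.update bs i V) j i := by
  have hji : j ≠ i := by rintro rfl; exact pred_irrefl bs j hj
  obtain ⟨hj0, hjc⟩ := hj
  refine ⟨by rwa [Function.update_of_ne hji], Or.inl ?_⟩
  rw [Function.update_self, Function.update_of_ne hji]
  rcases hjc with h | ⟨h, -⟩ <;> linarith

lemma rank_update_le (bs : Fin n → ℝ) (i : Fin n) {V : ℝ} (hlt : V < bs i) :
    rank bs i ≤ rank (Function.update bs i V) i := by
  rw [rank_eq, rank_eq]
  apply Finset.card_le_card
  intro j hj
  simp only [Finset.mem_filter, Finset.mem_univ, true_and] at *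
  exact pred_update hlt hj

lemma pred_congr {bs : Fin n → ℝ} {i j k : Fin n} {V : ℝ}
    (hj : j ≠ i) (hk : k ≠ i) :
    Pred (Function.update bs i V) j k ↔ Pred bs j k := by
  simp [Pred, Function.update_of_ne hj, Function.update_of_ne hk]

/-- existence of a maximal element among positive bidders ranked below `i`. -/
lemma exists_max (bs : Fin n → ℝ) (i : Fin n)
    (hne : ∃ j, 0 < bs j ∧ Pred bs i j) :
    ∃ m, (0 < bs m ∧ Pred bs i m) ∧
      ∀ k, 0 < bs k → Pred bs i k → k ≠ m → Pred bs m k := by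
  obtain ⟨j, hj⟩ := hne
  have hBne : (Finset.univ.filter fun k => 0 < bs k ∧ Pred bs i k).Nonempty :=
    ⟨j, by simp [hj]⟩
  obtain ⟨m, hmB, hmin⟩ := Finset.exists_min_image _
    (fun k => toLex (-bs k, k)) hBne
  obtain ⟨hm0, him⟩ := (Finset.mem_filter.mp hmB).2
  refine ⟨m, ⟨hm0, him⟩, fun k hk0 hik hkm => ?_⟩
  have hkB : k ∈ Finset.univ.filter fun k => 0 < bs k ∧ Pred bs i k := by
    simp [hk0, hik]
  have hle := hmin k hkB
  rw [Prod.Lex.le_iff] at hle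
  refine ⟨hm0, ?_⟩
  rcases hle with h | ⟨h1, h2⟩
  · exact Or.inl (by simpa using h)
  · have hbm : bs m = bs k := by
      have : -bs m = -bs k := h1
      linarith
    exact Or.inr ⟨hbm, lt_of_le_of_ne h2 (Ne.symm hkm)⟩

lemma rank_max_below {bs : Fin n → ℝ} {i m : Fin n} (hi : 0 < bs i)
    (hm : 0 < bs m) (him : Pred bs i m)
    (hmax : ∀ k, 0 < bs k → Pred bs i k → k ≠ m → Pred bs m k) :
    rank bs m = rank bs i + 1 := by
  have hset : (Finset.univ.filter fun j => Pred bs j m)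
      = insert i (Finset.univ.filter fun j => Pred bs j i) := by
    ext k
    simp only [Finset.mem_filter, Finset.mem_univ, true_and, Finset.mem_insert]
    constructor
    · intro hk
      by_cases hki : k = i
      · exact Or.inl hki
      · right
        by_contra hcon
        have hk0 : 0 < bs k := hk.1
        have hik : Pred bs i k := (pred_total hk0 hi hki).resolve_left hcon
        have hkm : k ≠ m := by rintro rfl; exact pred_irrefl bs k hk
        exact pred_asymm hk (hmax k hk0 hik hkm)
    · rintro (rfl | hk)
      · exact him
      · exact pred_trans hk him
  rw [rank_eq, rank_eq, hset,
    Finset.card_insert_of_notMem (by simp [pred_irrefl])]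

lemma pay_eq_max {bs : Fin n → ℝ} {i m : Fin n} (hi : 0 < bs i)
    (hm : 0 < bs m) (him : Pred bs i m)
    (hmax : ∀ k, 0 < bs k → Pred bs i k → k ≠ m → Pred bs m k) :
    pay bs i = bs m := by
  have hrm := rank_max_below hi hm him hmax
  have hD : (Finset.univ.filter fun j => 0 < bs j ∧ rank bs j = rank bs i + 1) = {m} := by
    ext k
    simp only [Finset.mem_filter, Finset.mem_univ, true_and, Finset.mem_singleton]
    constructor
    · rintro ⟨hk0, hkr⟩
      exact rank_injOn hk0 hm (by omega)
    · rintro rfl; exact ⟨hm, hrm⟩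
  rw [pay, hD, Finset.sum_singleton]

lemma pay_eq_zero {bs : Fin n → ℝ} {i : Fin n} (hi : 0 < bs i)
    (h : ∀ k, 0 < bs k → ¬ Pred bs i k) : pay bs i = 0 := by
  have hD : (Finset.univ.filter fun j => 0 < bs j ∧ rank bs j = rank bs i + 1) = ∅ := by
    ext k
    simp only [Finset.mem_filter, Finset.mem_univ, true_and, Finset.notMem_empty,
      iff_false, not_and]
    intro hk0 hkr
    have hki : k ≠ i := by rintro rfl; omega
    rcases pred_total hk0 hi hki with hp | hp
    · have := rank_lt hp; omega
    · exact h k hk0 hp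
  rw [pay, hD, Finset.sum_empty]

lemma pay_ge {bs : Fin n → ℝ} {i : Fin n} {V : ℝ} (hV : 0 ≤ V) (hlt : V < bs i)
    (hr : rank bs i < rank (Function.update bs i V) i) : V ≤ pay bs i := by
  have hi : 0 < bs i := lt_of_le_of_lt hV hlt
  have hsub : (Finset.univ.filter fun j => Pred bs j i)
      ⊆ Finset.univ.filter fun j => Pred (Function.update bs i V) j i := by
    intro j hj
    simp only [Finset.mem_filter, Finset.mem_univ, true_and] at *
    exact pred_update hlt hj
  rw [rank_eq, rank_eq] at hr
  have hss : (Finset.univ.filter fun j => Pred bs j i)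
      ⊂ Finset.univ.filter fun j => Pred (Function.update bs i V) j i :=
    Finset.ssubset_def.mpr ⟨hsub, fun h =>
      absurd (Finset.card_le_card h) (by omega)⟩
  obtain ⟨j, hjA', hjA⟩ := Finset.exists_of_ssubset hss
  simp only [Finset.mem_filter, Finset.mem_univ, true_and] at hjA' hjA
  have hji : j ≠ i := by rintro rfl; exact pred_irrefl _ _ hjA'
  have hj0 : 0 < bs j := by
    have := hjA'.1; rwa [Function.update_of_ne hji] at this
  have hjV : V ≤ bs j := by
    rcases hjA'.2 with h | ⟨h, -⟩
    · rw [Function.update_self, Function.update_of_ne hji] at h; linarith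
    · rw [Function.update_self, Function.update_of_ne hji] at h; linarith
  have hij : Pred bs i j := (pred_total hj0 hi hji).resolve_left hjA
  obtain ⟨m, ⟨hm0, him⟩, hmax⟩ := exists_max bs i ⟨j, hj0, hij⟩
  rw [pay_eq_max hi hm0 him hmax]
  rcases eq_or_ne j m with rfl | hjm
  · exact hjV
  · rcases (hmax j hj0 hij hjm).2 with h | ⟨h, -⟩ <;> linarith

lemma pay_update_eq {bs : Fin n → ℝ} {i : Fin n} {V : ℝ} (hV : 0 < V) (hlt : V < bs i)
    (hr : rank bs i = rank (Function.update bs i V) i) :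
    pay (Function.update bs i V) i = pay bs i := by
  have hi : 0 < bs i := hV.trans hlt
  have hi' : 0 < Function.update bs i V i := by rwa [Function.update_self]
  have hsub : (Finset.univ.filter fun j => Pred bs j i)
      ⊆ Finset.univ.filter fun j => Pred (Function.update bs i V) j i := by
    intro j hj
    simp only [Finset.mem_filter, Finset.mem_univ, true_and] at *
    exact pred_update hlt hj
  have hA : (Finset.univ.filter fun j => Pred bs j i)
      = Finset.univ.filter fun j => Pred (Function.update bs i V) j i := by
    apply Finset.eq_of_subset_of_card_le hsub
    rw [rank_eq, rank_eq] at hr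
    omega
  have hBB : ∀ k, k ≠ i → 0 < bs k →
      (Pred bs i k ↔ Pred (Function.update bs i V) i k) := by
    intro k hki hk0
    have hk0' : 0 < Function.update bs i V k := by rwa [Function.update_of_ne hki]
    constructor
    · intro h
      by_contra hn
      have hki' : Pred (Function.update bs i V) k i :=
        (pred_total hk0' hi' hki).resolve_right hn
      have : k ∈ Finset.univ.filter fun j => Pred (Function.update bs i V) j i := by
        simp [hki']
      rw [← hA] at this
      simp only [Finset.mem_filter, Finset.mem_univ, true_and] at this
      exact pred_asymm h this
    · intro h
      by_contra hn
      have hki2 : Pred bs k i := (pred_total hk0 hi hki).resolve_right hn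
      have : k ∈ Finset.univ.filter fun j => Pred bs j i := by simp [hki2]
      rw [hA] at this
      simp only [Finset.mem_filter, Finset.mem_univ, true_and] at this
      exact pred_asymm h this
  by_cases hBne : ∃ j, 0 < bs j ∧ Pred bs i j
  · obtain ⟨m, ⟨hm0, him⟩, hmax⟩ := exists_max bs i hBne
    have hmi : m ≠ i := by rintro rfl; exact pred_irrefl bs m him
    have hm0' : 0 < Function.update bs i V m := by rwa [Function.update_of_ne hmi]
    have him' : Pred (Function.update bs i V) i m := (hBB m hmi hm0).mp him
    have hmax' : ∀ k, 0 < Function.update bs i V k →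
        Pred (Function.update bs i V) i k → k ≠ m →
        Pred (Function.update bs i V) m k := by
      intro k hk0' hik' hkm
      have hki : k ≠ i := by
        rintro rfl; exact pred_irrefl _ _ hik'
      have hk0 : 0 < bs k := by rwa [Function.update_of_ne hki] at hk0'
      have hik : Pred bs i k := (hBB k hki hk0).mpr hik'
      exact (pred_congr hmi hki).mpr (hmax k hk0 hik hkm)
    rw [pay_eq_max hi' hm0' him' hmax', pay_eq_max hi hm0 him hmax,
      Function.update_of_ne hmi]
  · push_neg at hBne
    rw [pay_eq_zero hi hBne, pay_eq_zero hi']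
    intro k hk0' hik'
    have hki : k ≠ i := by rintro rfl; exact pred_irrefl _ _ hik'
    have hk0 : 0 < bs k := by rwa [Function.update_of_ne hki] at hk0'
    exact hBne k hk0 ((hBB k hki hk0).mpr hik')

/-- the key single-keyword inequality. -/
lemma gsp_key (w : ℕ → ℝ) (hw0 : ∀ k, 0 ≤ w k)
    (bs : Fin n → ℝ) (i : Fin n) (V : ℝ) (hV : 0 ≤ V) (hlt : V < bs i) :
    slotW w bs i * (V - pay bs i) ≤
      slotW w (Function.update bs i V) i * (V - pay (Function.update bs i V) i) := by
  have hbsi : 0 < bs i := lt_of_le_of_lt hV hlt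
  have hsW : slotW w bs i = w (rank bs i) := by simp [slotW, hbsi]
  rcases eq_or_lt_of_le hV with hV0 | hV0
  · have h1 : slotW w (Function.update bs i V) i = 0 := by
      simp [slotW, Function.update_self, ← hV0]
    rw [h1, zero_mul, hsW, ← hV0]
    have hp := pay_nonneg bs i
    have hwr := hw0 (rank bs i)
    nlinarith
  · have hsW' : slotW w (Function.update bs i V) i
        = w (rank (Function.update bs i V) i) := by
      simp [slotW, Function.update_self, hV0]
    rcases eq_or_lt_of_le (rank_update_le bs i hlt) with hr | hr
    · rw [hsW, hsW', ← hr, pay_update_eq hV0 hlt hr]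
    · have h1 : V ≤ pay bs i := pay_ge hV hlt hr
      have h2 : pay (Function.update bs i V) i ≤ V := by
        have := pay_le (bs := Function.update bs i V) (i := i)
          (by rwa [Function.update_self])
        rwa [Function.update_self] at this
      rw [hsW, hsW']
      have hwr := hw0 (rank bs i)
      have hwr' := hw0 (rank (Function.update bs i V) i)
      nlinarith

end PBMAux

open PBM in
open PBMAux in
/-- in PBM-GSP, bidding strictly above the expected keyword value
`v_i^s` on a keyword `s` is weakly dominated by bidding exactly `v_i^s` there. -/
theorem stmt0
    {Q S : Type*} [Fintype Q] [Fintype S] [DecidableEq S] {n : ℕ}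
    (P : Q → ℝ) (pi : Q → S → ℝ) (w : ℕ → ℝ) (κ : ℕ)
    (hP0 : ∀ q, 0 ≤ P q) (hP1 : ∑ q, P q = 1)
    (hpi0 : ∀ q s, 0 ≤ pi q s) (hpi1 : ∀ q, ∑ s, pi q s = 1)
    (hS : ∀ s : S, ∃ q, 0 < pi q s)
    (hw : Antitone w) (hw0 : ∀ k, 0 ≤ w k) (hκ : 0 < κ)
    (v : Fin n → Q → ℝ) (hv0 : ∀ i q, 0 ≤ v i q)
    (b : Fin n → S → ℝ) (hb : ∀ j, ValidBid κ (b j))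
    (i : Fin n) (s : S)
    (hover : kwVal P pi (v i) s < b i s) :
    util P pi w v b i ≤
      util P pi w v
        (Function.update b i (Function.update (b i) s (kwVal P pi (v i) s))) i := by
  classical
  set V := kwVal P pi (v i) s with hVdef
  set bs : Fin n → ℝ := fun j => b j s with hbs
  have hM0 : 0 ≤ ∑ q, pi q s * P q :=
    Finset.sum_nonneg fun q _ => mul_nonneg (hpi0 q s) (hP0 q)
  have hN0 : 0 ≤ ∑ q, pi q s * v i q * P q :=
    Finset.sum_nonneg fun q _ =>
      mul_nonneg (mul_nonneg (hpi0 q s) (hv0 i q)) (hP0 q)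
  have hV0 : 0 ≤ V := by
    rw [hVdef]; unfold kwVal; exact div_nonneg hN0 hM0
  have hlt : V < bs i := hover
  have hcolne : ∀ s' : S, s' ≠ s →
      (fun j => Function.update b i (Function.update (b i) s V) j s')
        = fun j => b j s' := by
    intro s' hs'
    funext j
    rcases eq_or_ne j i with rfl | hj
    · simp [Function.update_self, Function.update_of_ne hs']
    · simp [Function.update_of_ne hj]
  have hcols : (fun j => Function.update b i (Function.update (b i) s V) j s)
      = Function.update bs i V := by
    funext j
    rcases eq_or_ne j i with rfl | hj
    · simp [hbs]
    · simp [hbs, Function.update_of_ne hj]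
  have hkey : slotW w bs i * (V - pay bs i) ≤
      slotW w (Function.update bs i V) i * (V - pay (Function.update bs i V) i) :=
    gsp_key w hw0 bs i V hV0 hlt
  have hdiff : util P pi w v (Function.update b i (Function.update (b i) s V)) i
      - util P pi w v b i
      = ∑ q, P q * pi q s *
          (slotW w (Function.update bs i V) i * (v i q - pay (Function.update bs i V) i)
            - slotW w bs i * (v i q - pay bs i)) := by
    unfold util
    rw [← Finset.sum_sub_distrib]
    refine Finset.sum_congr rfl fun q _ => ?_
    rw [← mul_sub, ← Finset.sum_sub_distrib]
    rw [Finset.sum_eq_single s]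
    · rw [hcols, hbs]
      ring
    · intro s' _ hs'
      rw [hcolne s' hs']
      ring
    · intro hs; exact absurd (Finset.mem_univ s) hs
  rw [← sub_nonneg, hdiff]
  rcases eq_or_lt_of_le hM0 with hM | hM
  · refine le_of_eq (Finset.sum_eq_zero fun q _ => ?_).symm
    have hz : pi q s * P q = 0 := by
      have := (Finset.sum_eq_zero_iff_of_nonneg
        (fun q _ => mul_nonneg (hpi0 q s) (hP0 q))).mp hM.symm q (Finset.mem_univ q)
      exact this
    have : P q * pi q s = 0 := by rw [mul_comm]; exact hz
    rw [this, zero_mul]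
  · have hMne : (∑ q, pi q s * P q) ≠ 0 := ne_of_gt hM
    have hN : (∑ q, pi q s * v i q * P q) = V * ∑ q, pi q s * P q := by
      rw [hVdef]; unfold kwVal; rw [div_mul_cancel₀ _ hMne]
    have hsplit : ∑ q, P q * pi q s *
          (slotW w (Function.update bs i V) i * (v i q - pay (Function.update bs i V) i)
            - slotW w bs i * (v i q - pay bs i))
        = (slotW w (Function.update bs i V) i - slotW w bs i)
            * (∑ q, pi q s * v i q * P q)
          + (slotW w bs i * pay bs i
              - slotW w (Function.update bs i V) i * pay (Function.update bs i V) i)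
            * (∑ q, pi q s * P q) := by
      rw [Finset.mul_sum, Finset.mul_sum, ← Finset.sum_add_distrib]
      exact Finset.sum_congr rfl fun q _ => by ring
    rw [hsplit, hN]
    have h2 : 0 ≤ (∑ q, pi q s * P q) *
        (slotW w (Function.update bs i V) i * (V - pay (Function.update bs i V) i)
          - slotW w bs i * (V - pay bs i)) :=
      mul_nonneg hM.le (by linarith)
    nlinarith [h2]
end
end

section
/- In the PBM-GSP mechanism with a single slot (w_1 > 0 and w_k = 0 for all k ≥ 2), for every advertiser i and every keyword s, bidding b_i^s = v_i^s on keyword s is weakly dominant: for every bid profile b of all advertisers, replacing the s-coordinate of b_i by v_i^s (keeping all other coordinates of b fixed) does not decrease u_i. -/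
open Finset MeasureTheory

noncomputable section

namespace PBM

attribute [local instance] Classical.propDecidable

variable {Q S : Type*} [Fintype Q] [Fintype S]

end PBM

section Aux
open PBM Finset
attribute [local instance] Classical.propDecidable

variable {n : ℕ}

lemma pay_nonneg (bs : Fin n → ℝ) (hbs : ∀ j, 0 ≤ bs j) (i : Fin n) : 0 ≤ pay bs i :=
  Finset.sum_nonneg fun j _ => hbs j

lemma rank_lt (bs : Fin n → ℝ) {j k : Fin n} (hj : 0 < bs j)
    (h : bs k < bs j ∨ (bs j = bs k ∧ j < k)) : rank bs j < rank bs k := by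
  have hsub : insert j (Finset.univ.filter fun l => 0 < bs l ∧ (bs j < bs l ∨ (bs l = bs j ∧ l < j)))
      ⊆ Finset.univ.filter fun l => 0 < bs l ∧ (bs k < bs l ∨ (bs l = bs k ∧ l < k)) := by
    intro l hl
    simp only [Finset.mem_insert, Finset.mem_filter, Finset.mem_univ, true_and] at hl ⊢
    rcases hl with rfl | ⟨hl0, hl⟩
    · exact ⟨hj, h⟩
    · refine ⟨hl0, ?_⟩
      rcases hl with hl | ⟨hl1, hl2⟩ <;> rcases h with h | ⟨h1, h2⟩
      · exact Or.inl (by linarith)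
      · exact Or.inl (by linarith)
      · exact Or.inl (by linarith)
      · exact Or.inr ⟨by linarith, lt_trans hl2 h2⟩
  have hjn : j ∉ (Finset.univ.filter fun l => 0 < bs l ∧ (bs j < bs l ∨ (bs l = bs j ∧ l < j))) := by
    simp
  have h1 : rank bs j <
      (insert j (Finset.univ.filter fun l => 0 < bs l ∧ (bs j < bs l ∨ (bs l = bs j ∧ l < j)))).card := by
    rw [Finset.card_insert_of_notMem hjn]; exact Nat.lt_succ_self _
  exact lt_of_lt_of_le h1 (Finset.card_le_card hsub)

lemma rank_zero_top (bs : Fin n → ℝ) {i : Fin n} (h : rank bs i = 0) :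
    ∀ k, 0 < bs k → k ≠ i → bs k < bs i ∨ (bs k = bs i ∧ i < k) := by
  intro k hk hki
  have he : (Finset.univ.filter fun j => 0 < bs j ∧ (bs i < bs j ∨ (bs j = bs i ∧ j < i))) = ∅ :=
    Finset.card_eq_zero.mp h
  have hkn : k ∉ (Finset.univ.filter fun j => 0 < bs j ∧ (bs i < bs j ∨ (bs j = bs i ∧ j < i))) := by
    rw [he]; exact Finset.notMem_empty k
  simp only [Finset.mem_filter, Finset.mem_univ, true_and, not_and, not_or, not_lt] at hkn
  obtain ⟨h1, h2⟩ := hkn hk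
  rcases lt_or_eq_of_le h1 with h3 | h3
  · exact Or.inl h3
  · exact Or.inr ⟨h3, lt_of_le_of_ne (h2 h3) (Ne.symm hki)⟩

lemma pay_top (bs : Fin n → ℝ) {i m : Fin n} (hi : 0 < bs i) (hr : rank bs i = 0)
    (hm : 0 < bs m) (hmi : m ≠ i)
    (hmax : ∀ j, 0 < bs j → j ≠ i → j ≠ m → bs j < bs m ∨ (bs j = bs m ∧ m < j)) :
    pay bs i = bs m := by
  have hrm : rank bs m = 1 := by
    have hset : (Finset.univ.filter fun k => 0 < bs k ∧ (bs m < bs k ∨ (bs k = bs m ∧ k < m))) = {i} := by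
      ext k
      simp only [Finset.mem_filter, Finset.mem_univ, true_and, Finset.mem_singleton]
      constructor
      · rintro ⟨hk, hbk⟩
        by_contra hki
        have hkm : k ≠ m := by
          rintro rfl
          rcases hbk with h | ⟨_, h2⟩
          · exact lt_irrefl _ h
          · exact lt_irrefl _ h2
        rcases hmax k hk hki hkm with h | ⟨h1, h2⟩ <;> rcases hbk with h' | ⟨h1', h2'⟩
        · linarith
        · linarith
        · linarith
        · exact absurd (h2.trans h2') (lt_irrefl _)
      · rintro rfl
        refine ⟨hi, ?_⟩
        rcases rank_zero_top bs hr m hm hmi with h | ⟨h1, h2⟩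
        · exact Or.inl h
        · exact Or.inr ⟨h1.symm, h2⟩
    unfold rank
    rw [hset, Finset.card_singleton]
  have hset2 : (Finset.univ.filter fun j => 0 < bs j ∧ rank bs j = rank bs i + 1) = {m} := by
    ext j
    simp only [Finset.mem_filter, Finset.mem_univ, true_and, Finset.mem_singleton, hr]
    constructor
    · rintro ⟨hj, hrj⟩
      by_contra hjm
      have hji : j ≠ i := by
        rintro rfl
        rw [hr] at hrj
        omega
      have hbeat : bs j < bs m ∨ (bs m = bs j ∧ m < j) := by
        rcases hmax j hj hji hjm with h | ⟨h1, h2⟩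
        · exact Or.inl h
        · exact Or.inr ⟨h1.symm, h2⟩
      have := rank_lt bs hm hbeat
      rw [hrm] at this
      omega
    · rintro rfl
      exact ⟨hm, by rw [hrm]⟩
  unfold pay
  rw [hr] at hset2 ⊢
  rw [hset2, Finset.sum_singleton]

lemma pay_top_empty (bs : Fin n → ℝ) {i : Fin n} (hr : rank bs i = 0)
    (hT : ∀ j, 0 < bs j → j = i) : pay bs i = 0 := by
  unfold pay
  refine Finset.sum_eq_zero ?_
  intro j hj
  simp only [Finset.mem_filter, Finset.mem_univ, true_and] at hj
  exfalso
  have hji := hT j hj.1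
  subst hji
  rw [hr] at hj
  omega

lemma exists_lexmax (bs : Fin n → ℝ) {i j0 : Fin n} (hj0 : 0 < bs j0) (hj0i : j0 ≠ i) :
    ∃ m, 0 < bs m ∧ m ≠ i ∧ bs j0 ≤ bs m ∧
      ∀ j, 0 < bs j → j ≠ i → j ≠ m → bs j < bs m ∨ (bs j = bs m ∧ m < j) := by
  classical
  set T : Finset (Fin n) := Finset.univ.filter (fun j => 0 < bs j ∧ j ≠ i) with hT
  have hj0T : j0 ∈ T := by simp [hT, hj0, hj0i]
  obtain ⟨m', hm'T, hm'⟩ := Finset.exists_max_image T bs ⟨j0, hj0T⟩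
  set M : Finset (Fin n) := T.filter (fun j => ∀ k ∈ T, bs k ≤ bs j) with hM
  have hm'M : m' ∈ M := by
    simp only [hM, Finset.mem_filter]
    exact ⟨hm'T, hm'⟩
  have hMne : M.Nonempty := ⟨m', hm'M⟩
  set m := M.min' hMne with hm
  have hmM : m ∈ M := M.min'_mem hMne
  rw [hM, Finset.mem_filter] at hmM
  obtain ⟨hmT, hmmax⟩ := hmM
  have hmT' := hmT
  rw [hT, Finset.mem_filter] at hmT'
  obtain ⟨_, hm0, hmi⟩ := hmT'
  refine ⟨m, hm0, hmi, hmmax j0 hj0T, ?_⟩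
  intro j hj hji hjm
  have hjT : j ∈ T := by simp [hT, hj, hji]
  have hle := hmmax j hjT
  rcases lt_or_eq_of_le hle with h | h
  · exact Or.inl h
  · refine Or.inr ⟨h, ?_⟩
    have hjM : j ∈ M := by
      rw [hM, Finset.mem_filter]
      exact ⟨hjT, fun k hk => (hmmax k hk).trans h.ge⟩
    exact lt_of_le_of_ne (M.min'_le j hjM) (Ne.symm hjm)

lemma key_single (w : ℕ → ℝ) (hw0 : ∀ k, 0 ≤ w k) (hwk : ∀ k, 1 ≤ k → w k = 0)
    (bs : Fin n → ℝ) (hbs : ∀ j, 0 ≤ bs j) (i : Fin n) (V : ℝ) (hV : 0 ≤ V) :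
    slotW w bs i * (V - pay bs i) ≤
      slotW w (Function.update bs i V) i * (V - pay (Function.update bs i V) i) := by
  classical
  set bs' := Function.update bs i V with hbs'def
  have hbs'i : bs' i = V := Function.update_self i V bs
  have hbs'j : ∀ j, j ≠ i → bs' j = bs j := fun j hj => Function.update_of_ne hj V bs
  rcases eq_or_lt_of_le hV with hV0 | hVpos
  · -- V = 0
    have hR : slotW w bs' i = 0 := by
      unfold slotW
      rw [hbs'i, ← hV0]
      simp
    rw [hR, zero_mul]
    unfold slotW
    by_cases h : 0 < bs i
    · simp only [h, if_pos]
      have h1 := pay_nonneg bs hbs i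
      have h2 := hw0 (rank bs i)
      nlinarith
    · simp [h]
  · -- 0 < V
    have hbsi' : 0 < bs' i := by rw [hbs'i]; exact hVpos
    by_cases hr' : rank bs' i = 0
    · -- i wins under bs'
      by_cases hT : ∃ j, 0 < bs j ∧ j ≠ i
      · obtain ⟨j0, hj00, hj0i⟩ := hT
        obtain ⟨m, hm0, hmi, _, hmax⟩ := exists_lexmax bs hj00 hj0i
        have hm0' : 0 < bs' m := by rw [hbs'j m hmi]; exact hm0
        have hmax' : ∀ j, 0 < bs' j → j ≠ i → j ≠ m → bs' j < bs' m ∨ (bs' j = bs' m ∧ m < j) := by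
          intro j hj hji hjm
          rw [hbs'j j hji] at hj ⊢
          rw [hbs'j m hmi]
          exact hmax j hj hji hjm
        have hpay' : pay bs' i = bs m := by
          rw [pay_top bs' hbsi' hr' hm0' hmi hmax', hbs'j m hmi]
        have hmV : bs m ≤ V := by
          have h := rank_zero_top bs' hr' m hm0' hmi
          rw [hbs'i, hbs'j m hmi] at h
          rcases h with h | ⟨h, _⟩
          · linarith
          · linarith
        have hRHS : slotW w bs' i * (V - pay bs' i) = w 0 * (V - bs m) := by
          unfold slotW
          simp [hbsi', hr', hpay']
        rw [hRHS]
        by_cases hbi : 0 < bs i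
        · by_cases hri : rank bs i = 0
          · have hpay : pay bs i = bs m := pay_top bs hbi hri hm0 hmi hmax
            unfold slotW
            simp [hbi, hpay, hri]
          · unfold slotW
            have : w (rank bs i) = 0 := hwk _ (by omega)
            simp only [hbi, if_pos, this, zero_mul]
            exact mul_nonneg (hw0 0) (by linarith)
        · unfold slotW
          rw [if_neg hbi, zero_mul]
          exact mul_nonneg (hw0 0) (by linarith)
      · push_neg at hT
        have hT' : ∀ j, 0 < bs' j → j = i := by
          intro j hj
          by_contra hji
          rw [hbs'j j hji] at hj
          exact hji (hT j hj)
        have hpay' : pay bs' i = 0 := pay_top_empty bs' hr' hT'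
        have hRHS : slotW w bs' i * (V - pay bs' i) = w 0 * V := by
          unfold slotW
          simp [hbsi', hr', hpay']
        rw [hRHS]
        by_cases hbi : 0 < bs i
        · have hri : rank bs i = 0 := by
            unfold rank
            rw [Finset.card_eq_zero, Finset.filter_eq_empty_iff]
            rintro j _ ⟨hj0, hjb⟩
            have := hT j hj0
            subst this
            rcases hjb with h | ⟨_, h⟩
            · exact lt_irrefl _ h
            · exact lt_irrefl _ h
          have hpay : pay bs i = 0 := pay_top_empty bs hri hT
          unfold slotW
          simp [hbi, hri, hpay]
        · unfold slotW
          simp only [hbi, if_false, zero_mul]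
          exact mul_nonneg (hw0 0) hVpos.le
    · -- rank bs' i ≥ 1 : RHS is 0
      have hw' : w (rank bs' i) = 0 := hwk _ (by omega)
      have hRHS : slotW w bs' i * (V - pay bs' i) = 0 := by
        unfold slotW
        simp [hbsi', hw']
      rw [hRHS]
      by_cases hbi : 0 < bs i
      · by_cases hri : rank bs i = 0
        · -- pay bs i ≥ V
          have hne : ∃ j, 0 < bs' j ∧ (bs' i < bs' j ∨ (bs' j = bs' i ∧ j < i)) := by
            by_contra hc
            push_neg at hc
            apply hr'
            unfold rank
            rw [Finset.card_eq_zero, Finset.filter_eq_empty_iff]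
            rintro j _ ⟨hj0, hjb⟩
            obtain ⟨hle, himp⟩ := hc j hj0
            rcases hjb with h | ⟨h1, h2⟩
            · exact absurd h (not_lt.mpr hle)
            · exact absurd h2 (not_lt.mpr (himp h1))
          obtain ⟨j, hj0, hjb⟩ := hne
          have hji : j ≠ i := by
            rintro rfl
            rcases hjb with h | ⟨_, h⟩
            · exact lt_irrefl _ h
            · exact lt_irrefl _ h
          rw [hbs'j j hji] at hj0 hjb
          rw [hbs'i] at hjb
          have hVj : V ≤ bs j := by
            rcases hjb with h | ⟨h, _⟩
            · linarith
            · linarith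
          obtain ⟨m, hm0, hmi, hjm, hmax⟩ := exists_lexmax bs hj0 hji
          have hpay : pay bs i = bs m := pay_top bs hbi hri hm0 hmi hmax
          unfold slotW
          simp only [hbi, if_pos, hpay]
          have := hw0 (rank bs i)
          nlinarith
        · unfold slotW
          have : w (rank bs i) = 0 := hwk _ (by omega)
          simp [hbi, this]
      · unfold slotW
        simp [hbi]

end Aux

open PBM in
/-- in single-slot PBM-GSP, bidding `b_i^s = v_i^s` on keyword `s`
is weakly dominant: replacing the `s`-coordinate of `b_i` by `v_i^s` never
decreases advertiser `i`'s utility, whatever the bid profile. -/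
theorem stmt1
    {Q S : Type*} [Fintype Q] [Fintype S] [DecidableEq S] {n : ℕ}
    (P : Q → ℝ) (pi : Q → S → ℝ) (w : ℕ → ℝ) (κ : ℕ)
    (hP0 : ∀ q, 0 ≤ P q) (hP1 : ∑ q, P q = 1)
    (hpi0 : ∀ q s, 0 ≤ pi q s) (hpi1 : ∀ q, ∑ s, pi q s = 1)
    (hS : ∀ s : S, ∃ q, 0 < pi q s)
    (hw0 : ∀ k, 0 ≤ w k) (hκ : 0 < κ)
    (hw1 : 0 < w 0) (hwk : ∀ k, 1 ≤ k → w k = 0)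
    (v : Fin n → Q → ℝ) (hv0 : ∀ i q, 0 ≤ v i q)
    (b : Fin n → S → ℝ) (hb : ∀ j, ValidBid κ (b j))
    (i : Fin n) (s : S) :
    util P pi w v b i ≤
      util P pi w v
        (Function.update b i (Function.update (b i) s (kwVal P pi (v i) s))) i := by
  classical
  set V := kwVal P pi (v i) s with hVdef
  set b' := Function.update b i (Function.update (b i) s V) with hb'def
  have hV : 0 ≤ V := by
    rw [hVdef]
    unfold kwVal
    apply div_nonneg
    · exact Finset.sum_nonneg fun q _ =>
        mul_nonneg (mul_nonneg (hpi0 q s) (hv0 i q)) (hP0 q)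
    · exact Finset.sum_nonneg fun q _ => mul_nonneg (hpi0 q s) (hP0 q)
  set bs : Fin n → ℝ := fun j => b j s with hbsdef
  have hbup : (fun j => b' j s) = Function.update bs i V := by
    funext j
    by_cases hj : j = i
    · subst hj
      rw [hb'def]
      simp [Function.update_self]
    · rw [hb'def]
      simp [Function.update_of_ne hj, hbsdef]
  have hrest : ∀ s' : S, s' ≠ s → (fun j => b' j s') = (fun j => b j s') := by
    intro s' hs'
    funext j
    by_cases hj : j = i
    · subst hj
      rw [hb'def]
      simp [Function.update_self, Function.update_of_ne hs']
    · rw [hb'def]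
      simp [Function.update_of_ne hj]
  have hbs0 : ∀ j, 0 ≤ bs j := fun j => (hb j).1 s
  set A : ℝ := slotW w bs i with hAdef
  set p : ℝ := pay bs i with hpdef
  set A' : ℝ := slotW w (Function.update bs i V) i with hA'def
  set p' : ℝ := pay (Function.update bs i V) i with hp'def
  have hkey : A * (V - p) ≤ A' * (V - p') :=
    key_single w hw0 hwk bs hbs0 i V hV
  rw [← sub_nonneg]
  have hdiff : util P pi w v b' i - util P pi w v b i
      = ∑ q, (pi q s * v i q * P q * (A' - A) + pi q s * P q * (A * p - A' * p')) := by
    unfold util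
    rw [← Finset.sum_sub_distrib]
    apply Finset.sum_congr rfl
    intro q _
    rw [← mul_sub, ← Finset.sum_sub_distrib]
    have hinner : ∑ s' : S, (pi q s' *
          (slotW w (fun j => b' j s') i * (v i q - pay (fun j => b' j s') i)) -
        pi q s' * (slotW w (fun j => b j s') i * (v i q - pay (fun j => b j s') i)))
        = pi q s * (A' * (v i q - p') - A * (v i q - p)) := by
      rw [Fintype.sum_eq_single s]
      · rw [hbup, ← hA'def, ← hp'def, ← hAdef, ← hpdef]
        ring
      · intro s' hs'
        rw [hrest s' hs']
        ring
    rw [hinner]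
    ring
  rw [hdiff]
  have hsplit : ∑ q, (pi q s * v i q * P q * (A' - A) + pi q s * P q * (A * p - A' * p'))
      = (∑ q, pi q s * v i q * P q) * (A' - A) + (∑ q, pi q s * P q) * (A * p - A' * p') := by
    rw [Finset.sum_add_distrib, Finset.sum_mul, Finset.sum_mul]
  rw [hsplit]
  set num : ℝ := ∑ q, pi q s * v i q * P q with hnumdef
  set mas : ℝ := ∑ q, pi q s * P q with hmasdef
  have hmas0 : 0 ≤ mas :=
    Finset.sum_nonneg fun q _ => mul_nonneg (hpi0 q s) (hP0 q)
  rcases eq_or_lt_of_le hmas0 with hmz | hmpos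
  · -- mass = 0 : every term vanishes
    have hterm : ∀ q : Q, pi q s * P q = 0 := by
      intro q
      have := (Finset.sum_eq_zero_iff_of_nonneg
        (fun q _ => mul_nonneg (hpi0 q s) (hP0 q))).mp hmz.symm
      exact this q (Finset.mem_univ q)
    have hnum0 : num = 0 := by
      rw [hnumdef]
      apply Finset.sum_eq_zero
      intro q _
      have h := hterm q
      nlinarith [hpi0 q s, hP0 q, hv0 i q]
    rw [hnum0, ← hmz]
    simp
  · have hnum : num = V * mas := by
      rw [hVdef]
      unfold kwVal
      rw [← hnumdef, ← hmasdef] at *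
      field_simp
    rw [hnum]
    have : V * mas * (A' - A) + mas * (A * p - A' * p')
        = mas * (A' * (V - p') - A * (V - p)) := by ring
    rw [this]
    exact mul_nonneg hmpos.le (by linarith)
end
end

section
/- If an n-player game of incomplete information is (λ,μ)-semi-smooth with λ > 0 and μ ≥ 0, and its social welfare function satisfies SW(b; v) ≥ Σ_i u_i(b; v) for all pure strategy profiles b and all type vectors v, then for every Bayes-Nash equilibrium b(·), E_v[SW(OPT(v))] ≤ ((μ+1)/λ) · E_{v, b(v)}[SW(b(v); v)]; that is, the Bayes-Nash price of anarchy is at most (μ+1)/λ. -/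
open Finset MeasureTheory

noncomputable section

namespace PBM

attribute [local instance] Classical.propDecidable

variable {Q S : Type*} [Fintype Q] [Fintype S]

end PBM

/-- if an `n`-player game of incomplete information is
`(λ,μ)`-semi-smooth (witnessed by randomized strategies `dev i (v i)` driven by
a seed `θ ∼ ν`) and its social welfare dominates the sum of utilities, then for
every Bayes-Nash equilibrium the expected optimal welfare is at most
`(μ+1)/λ` times the expected equilibrium welfare. -/
theorem stmt2
    {V B : Type*} [MeasurableSpace V] [MeasurableSpace B] {n : ℕ}
    (u : (Fin n → B) → (Fin n → V) → Fin n → ℝ)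
    (SW : (Fin n → B) → (Fin n → V) → ℝ)
    (SWopt : (Fin n → V) → ℝ)
    (lam mu : ℝ) (hlam : 0 < lam) (hmu : 0 ≤ mu)
    (hOPT0 : ∀ v, 0 ≤ SWopt v)
    (hSWge : ∀ b v, ∑ i, u b v i ≤ SW b v)
    -- semi-smoothness witness
    {Θ : Type*} [MeasurableSpace Θ] (ν : MeasureTheory.Measure Θ)
    [MeasureTheory.IsProbabilityMeasure ν]
    (dev : Fin n → V → Θ → B)
    (hsmooth : ∀ (b : Fin n → B) (v : Fin n → V),
      lam * SWopt v - mu * SW b v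
        ≤ ∑ i, ∫ θ, u (Function.update b i (dev i (v i) θ)) v i ∂ν)
    -- a Bayes-Nash equilibrium: joint distribution of types and bids
    {Ω : Type*} [MeasurableSpace Ω] (μ : MeasureTheory.Measure Ω)
    [MeasureTheory.IsProbabilityMeasure μ]
    (Vf : Ω → Fin n → V) (Bf : Ω → Fin n → B)
    (hBNE : ∀ (i : Fin n) (dv : V → B),
      ∫ ω, u (Function.update (Bf ω) i (dv (Vf ω i))) (Vf ω) i ∂μ
        ≤ ∫ ω, u (Bf ω) (Vf ω) i ∂μ)
    -- integrability
    (hIntOpt : MeasureTheory.Integrable (fun ω => SWopt (Vf ω)) μ)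
    (hIntSW : MeasureTheory.Integrable (fun ω => SW (Bf ω) (Vf ω)) μ)
    (hIntU : ∀ i, MeasureTheory.Integrable (fun ω => u (Bf ω) (Vf ω) i) μ)
    (hIntProd : ∀ i : Fin n,
      MeasureTheory.Integrable
        (fun p : Ω × Θ =>
          u (Function.update (Bf p.1) i (dev i (Vf p.1 i) p.2)) (Vf p.1) i)
        (μ.prod ν)) :
    ∫ ω, SWopt (Vf ω) ∂μ ≤ ((mu + 1) / lam) * ∫ ω, SW (Bf ω) (Vf ω) ∂μ := by
  set A := ∫ ω, SWopt (Vf ω) ∂μ with hA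
  set Bv := ∫ ω, SW (Bf ω) (Vf ω) ∂μ with hB
  have hIntDev : ∀ i : Fin n,
      MeasureTheory.Integrable
        (fun ω => ∫ θ, u (Function.update (Bf ω) i (dev i (Vf ω i) θ)) (Vf ω) i ∂ν) μ :=
    fun i => (hIntProd i).integral_prod_left
  have key : lam * A - mu * Bv ≤ Bv := by
    have h1 : lam * A - mu * Bv
        = ∫ ω, (lam * SWopt (Vf ω) - mu * SW (Bf ω) (Vf ω)) ∂μ := by
      rw [integral_sub (hIntOpt.const_mul lam) (hIntSW.const_mul mu),
        integral_const_mul, integral_const_mul]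
    have h2 : ∫ ω, (lam * SWopt (Vf ω) - mu * SW (Bf ω) (Vf ω)) ∂μ
        ≤ ∫ ω, ∑ i, ∫ θ, u (Function.update (Bf ω) i (dev i (Vf ω i) θ)) (Vf ω) i ∂ν ∂μ := by
      refine integral_mono ((hIntOpt.const_mul lam).sub (hIntSW.const_mul mu))
        (integrable_finset_sum _ fun i _ => hIntDev i) (fun ω => hsmooth (Bf ω) (Vf ω))
    have h3 : ∫ ω, ∑ i, ∫ θ, u (Function.update (Bf ω) i (dev i (Vf ω i) θ)) (Vf ω) i ∂ν ∂μ
        = ∑ i, ∫ ω, ∫ θ, u (Function.update (Bf ω) i (dev i (Vf ω i) θ)) (Vf ω) i ∂ν ∂μ :=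
      integral_finset_sum _ fun i _ => hIntDev i
    have h4 : ∀ i : Fin n,
        ∫ ω, ∫ θ, u (Function.update (Bf ω) i (dev i (Vf ω i) θ)) (Vf ω) i ∂ν ∂μ
          ≤ ∫ ω, u (Bf ω) (Vf ω) i ∂μ := by
      intro i
      have hswap : ∫ ω, ∫ θ, u (Function.update (Bf ω) i (dev i (Vf ω i) θ)) (Vf ω) i ∂ν ∂μ
          = ∫ θ, ∫ ω, u (Function.update (Bf ω) i (dev i (Vf ω i) θ)) (Vf ω) i ∂μ ∂ν :=
        integral_integral_swap (hIntProd i)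
      rw [hswap]
      have hle : ∫ θ, ∫ ω, u (Function.update (Bf ω) i (dev i (Vf ω i) θ)) (Vf ω) i ∂μ ∂ν
          ≤ ∫ _θ : Θ, (∫ ω, u (Bf ω) (Vf ω) i ∂μ) ∂ν :=
        integral_mono (hIntProd i).integral_prod_right (integrable_const _)
          (fun θ => hBNE i (fun vi => dev i vi θ))
      simpa using hle
    have h5 : ∑ i, ∫ ω, u (Bf ω) (Vf ω) i ∂μ ≤ Bv := by
      rw [← integral_finset_sum _ fun i _ => hIntU i]
      exact integral_mono (integrable_finset_sum _ fun i _ => hIntU i) hIntSW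
        (fun ω => hSWge (Bf ω) (Vf ω))
    calc lam * A - mu * Bv
        ≤ ∑ i, ∫ ω, ∫ θ, u (Function.update (Bf ω) i (dev i (Vf ω i) θ)) (Vf ω) i ∂ν ∂μ := by
          rw [h1]; exact h2.trans_eq h3
      _ ≤ ∑ i, ∫ ω, u (Bf ω) (Vf ω) i ∂μ := Finset.sum_le_sum fun i _ => h4 i
      _ ≤ Bv := h5
  rw [div_mul_eq_mul_div, le_div_iff₀ hlam]
  nlinarith
end
end

section
/- If the auction system is c-expected-homogeneous, then E_v[SW(OPT(v))] ≤ c · E_v[SW(𝔳)], where 𝔳 is the truthful keyword-bid profile; that is, the expected optimal social welfare is at most c times the expected welfare of the allocation that ranks advertisers on every keyword by their expected keyword values. -/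
open Finset MeasureTheory

noncomputable section

namespace PBM

attribute [local instance] Classical.propDecidable

variable {Q S : Type*} [Fintype Q] [Fintype S]

section Rearrangement

variable {n : ℕ}

lemma beats_trans {x : Fin n → ℝ} {k j i : Fin n}
    (h1 : x j < x k ∨ (x k = x j ∧ k < j)) (h2 : x i < x j ∨ (x j = x i ∧ j < i)) :
    x i < x k ∨ (x k = x i ∧ k < i) := by
  rcases h1 with h1 | ⟨h1e, h1l⟩ <;> rcases h2 with h2 | ⟨h2e, h2l⟩
  · exact Or.inl (h2.trans h1)
  · exact Or.inl (by rw [← h2e]; exact h1)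
  · exact Or.inl (by rw [h1e]; exact h2)
  · exact Or.inr ⟨h1e.trans h2e, h1l.trans h2l⟩

lemma rankAll_lt_rankAll {x : Fin n → ℝ} {i j : Fin n}
    (h : x i < x j ∨ (x j = x i ∧ j < i)) : rankAll x j < rankAll x i := by
  have hsub : (Finset.univ.filter fun k => x j < x k ∨ (x k = x j ∧ k < j)) ⊆
      (Finset.univ.filter fun k => x i < x k ∨ (x k = x i ∧ k < i)) := by
    intro k hk
    simp only [Finset.mem_filter] at hk ⊢
    exact ⟨hk.1, beats_trans hk.2 h⟩
  have hss : (Finset.univ.filter fun k => x j < x k ∨ (x k = x j ∧ k < j)) ⊂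
      (Finset.univ.filter fun k => x i < x k ∨ (x k = x i ∧ k < i)) := by
    rw [Finset.ssubset_iff_of_subset hsub]
    refine ⟨j, Finset.mem_filter.2 ⟨Finset.mem_univ _, h⟩, ?_⟩
    simp only [Finset.mem_filter, Finset.mem_univ, true_and]
    intro hj
    simp at hj
  exact Finset.card_lt_card hss

lemma rankAll_injective (x : Fin n → ℝ) : Function.Injective (rankAll x) := by
  intro i j hij
  by_contra hne
  have h2 : rankAll x j < rankAll x i ∨ rankAll x i < rankAll x j := by
    rcases lt_trichotomy (x i) (x j) with h | h | h
    · exact Or.inl (rankAll_lt_rankAll (Or.inl h))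
    · rcases (Fin.val_injective.ne hne).lt_or_gt with hl | hl
      · exact Or.inr (rankAll_lt_rankAll (Or.inr ⟨h, Fin.mk_lt_mk.2 hl⟩))
      · exact Or.inl (rankAll_lt_rankAll (Or.inr ⟨h.symm, Fin.mk_lt_mk.2 hl⟩))
    · exact Or.inr (rankAll_lt_rankAll (Or.inl h))
  omega

lemma le_of_rankAll_lt {x : Fin n → ℝ} {i j : Fin n}
    (h : rankAll x j < rankAll x i) : x i ≤ x j := by
  by_contra hxy
  push_neg at hxy
  exact lt_asymm h (rankAll_lt_rankAll (Or.inl hxy))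

lemma rankAll_lt_n (x : Fin n → ℝ) (i : Fin n) : rankAll x i < n := by
  have hss : (Finset.univ.filter fun k => x i < x k ∨ (x k = x i ∧ k < i)) ⊂
      (Finset.univ : Finset (Fin n)) := by
    rw [Finset.ssubset_univ_iff]
    intro hEq
    have hmem : i ∈ Finset.univ.filter fun k => x i < x k ∨ (x k = x i ∧ k < i) := by
      rw [hEq]; exact Finset.mem_univ i
    rcases (Finset.mem_filter.1 hmem).2 with hj | ⟨-, hj⟩ <;> exact absurd hj (lt_irrefl _)
  have := Finset.card_lt_card hss
  rwa [Finset.card_univ, Fintype.card_fin] at this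

lemma card_rankAll_le (x : Fin n → ℝ) (m : ℕ) :
    (Finset.univ.filter fun i => rankAll x i ≤ m).card = min (m + 1) n := by
  have hinj := rankAll_injective x
  have himg : Finset.univ.image (rankAll x) = Finset.range n := by
    apply Finset.eq_of_subset_of_card_le
    · intro k hk
      rcases Finset.mem_image.1 hk with ⟨i, -, rfl⟩
      exact Finset.mem_range.2 (rankAll_lt_n x i)
    · rw [Finset.card_range, Finset.card_image_of_injective _ hinj, Finset.card_univ,
        Fintype.card_fin]
  rw [← Finset.card_image_of_injective (Finset.univ.filter fun i => rankAll x i ≤ m) hinj]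
  have h2 : (Finset.univ.filter fun i => rankAll x i ≤ m).image (rankAll x)
      = (Finset.range n).filter fun k => k ≤ m := by
    ext k
    simp only [Finset.mem_image, Finset.mem_filter, Finset.mem_range, Finset.mem_univ, true_and]
    constructor
    · rintro ⟨i, hi, rfl⟩
      exact ⟨rankAll_lt_n x i, hi⟩
    · rintro ⟨hkn, hkm⟩
      have hk : k ∈ Finset.univ.image (rankAll x) := by
        rw [himg]; exact Finset.mem_range.2 hkn
      rcases Finset.mem_image.1 hk with ⟨i, -, rfl⟩
      exact ⟨i, hkm, rfl⟩
  rw [h2]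
  have h3 : (Finset.range n).filter (fun k => k ≤ m) = Finset.range (min (m + 1) n) := by
    ext k
    simp only [Finset.mem_filter, Finset.mem_range, Nat.lt_min]
    omega
  rw [h3, Finset.card_range]

lemma sum_le_sum_of_card_le {x : Fin n → ℝ} (hx : ∀ i, 0 ≤ x i) {A B : Finset (Fin n)}
    (hcard : A.card ≤ B.card)
    (hcmp : ∀ i ∈ A, i ∉ B → ∀ j ∈ B, j ∉ A → x i ≤ x j) :
    ∑ i ∈ A, x i ≤ ∑ i ∈ B, x i := by
  classical
  have hA : ∑ i ∈ A ∩ B, x i + ∑ i ∈ A \ B, x i = ∑ i ∈ A, x i :=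
    Finset.sum_inter_add_sum_sdiff A B x
  have hB : ∑ i ∈ A ∩ B, x i + ∑ i ∈ B \ A, x i = ∑ i ∈ B, x i := by
    rw [Finset.inter_comm]; exact Finset.sum_inter_add_sum_sdiff B A x
  rw [← hA, ← hB]
  apply add_le_add le_rfl
  have hc : (A \ B).card ≤ (B \ A).card := by
    have h1 := Finset.card_inter_add_card_sdiff A B
    have h2 := Finset.card_inter_add_card_sdiff B A
    rw [Finset.inter_comm B A] at h2
    omega
  rcases Finset.eq_empty_or_nonempty (A \ B) with he | ⟨i0, hi0⟩
  · rw [he, Finset.sum_empty]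
    exact Finset.sum_nonneg fun j _ => hx j
  · have : Nonempty (Fin n) := ⟨i0⟩
    obtain ⟨f, hmap, hinj⟩ := Set.Finite.exists_injOn_of_encard_le
      (s := ((A \ B : Finset (Fin n)) : Set (Fin n)))
      (t := ((B \ A : Finset (Fin n)) : Set (Fin n)))
      ((A \ B : Finset (Fin n)) : Set (Fin n)).toFinite
      (by rw [Set.encard_coe_eq_coe_finsetCard, Set.encard_coe_eq_coe_finsetCard]
          exact_mod_cast hc)
    have hfmem : ∀ a ∈ A \ B, f a ∈ B \ A := by
      intro a ha
      have h := hmap (Finset.mem_coe.2 ha)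
      rw [Set.mem_preimage] at h
      exact Finset.mem_coe.1 h
    calc ∑ i ∈ A \ B, x i ≤ ∑ i ∈ A \ B, x (f i) := by
          apply Finset.sum_le_sum
          intro i hi
          have hiA := Finset.mem_sdiff.1 hi
          have hfBA := Finset.mem_sdiff.1 (hfmem i hi)
          exact hcmp i hiA.1 hiA.2 (f i) hfBA.1 hfBA.2
      _ = ∑ j ∈ (A \ B).image f, x j := by
          rw [Finset.sum_image]
          intro a ha b hb hab
          exact hinj (Finset.mem_coe.2 ha) (Finset.mem_coe.2 hb) hab
      _ ≤ ∑ j ∈ B \ A, x j := by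
          apply Finset.sum_le_sum_of_subset_of_nonneg
          · intro j hj
            rcases Finset.mem_image.1 hj with ⟨a, ha, rfl⟩
            exact hfmem a ha
          · exact fun j _ _ => hx j

lemma level_sum_le {x : Fin n → ℝ} (hx : ∀ i, 0 ≤ x i) {τ : Fin n → ℕ}
    (hτ : Function.Injective τ) (m : ℕ) :
    ∑ i ∈ Finset.univ.filter (fun i => τ i ≤ m), x i
      ≤ ∑ i ∈ Finset.univ.filter (fun i => rankAll x i ≤ m), x i := by
  apply sum_le_sum_of_card_le hx
  · rw [card_rankAll_le]
    apply le_min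
    · calc (Finset.univ.filter fun i => τ i ≤ m).card
          = ((Finset.univ.filter fun i => τ i ≤ m).image τ).card :=
            (Finset.card_image_of_injective _ hτ).symm
        _ ≤ (Finset.range (m + 1)).card := by
            apply Finset.card_le_card
            intro k hk
            rcases Finset.mem_image.1 hk with ⟨i, hi, rfl⟩
            exact Finset.mem_range.2 (Nat.lt_succ_of_le (Finset.mem_filter.1 hi).2)
        _ = m + 1 := Finset.card_range _
    · calc (Finset.univ.filter fun i => τ i ≤ m).card
          ≤ (Finset.univ : Finset (Fin n)).card := Finset.card_le_card (Finset.filter_subset _ _)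
        _ = n := by rw [Finset.card_univ, Fintype.card_fin]
  · intro i hi hiB j hj _
    simp only [Finset.mem_filter, Finset.mem_univ, true_and] at hi hiB hj
    push_neg at hiB
    exact le_of_rankAll_lt (lt_of_le_of_lt hj hiB)

lemma sum_mul_expand (w : ℕ → ℝ) (x : Fin n → ℝ) (τ : Fin n → ℕ) {N : ℕ}
    (hτ : ∀ i, τ i < N) :
    ∑ i, w (τ i) * x i = w N * ∑ i, x i +
      ∑ m ∈ Finset.range N, (w m - w (m + 1)) *
        ∑ i ∈ Finset.univ.filter (fun i => τ i ≤ m), x i := by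
  have key : ∀ i : Fin n, w (τ i) = w N + ∑ m ∈ Finset.range N,
      (if τ i ≤ m then w m - w (m + 1) else 0) := by
    intro i
    have h1 : (Finset.range N).filter (fun m => τ i ≤ m) = Finset.Ico (τ i) N := by
      ext k
      simp only [Finset.mem_filter, Finset.mem_range, Finset.mem_Ico]
      tauto
    have h2 : ∑ m ∈ Finset.range N, (if τ i ≤ m then w m - w (m + 1) else 0)
        = ∑ m ∈ Finset.Ico (τ i) N, (w m - w (m + 1)) := by
      rw [← h1, Finset.sum_filter]
    rw [h2, Finset.sum_Ico_eq_sub _ (hτ i).le, Finset.sum_range_sub' w,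
      Finset.sum_range_sub' w]
    ring
  calc ∑ i, w (τ i) * x i
      = ∑ i, (w N * x i + ∑ m ∈ Finset.range N,
          (if τ i ≤ m then (w m - w (m + 1)) * x i else 0)) := by
        refine Finset.sum_congr rfl fun i _ => ?_
        rw [key i, add_mul, Finset.sum_mul]
        congr 1
        refine Finset.sum_congr rfl fun m _ => ?_
        rw [ite_mul, zero_mul]
    _ = w N * ∑ i, x i + ∑ m ∈ Finset.range N, ∑ i,
          (if τ i ≤ m then (w m - w (m + 1)) * x i else 0) := by
        rw [Finset.sum_add_distrib, ← Finset.mul_sum, Finset.sum_comm]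
    _ = _ := by
        congr 1
        refine Finset.sum_congr rfl fun m _ => ?_
        rw [← Finset.sum_filter, Finset.mul_sum]

lemma rearrange_le {w : ℕ → ℝ} (hw : Antitone w) (hw0 : ∀ k, 0 ≤ w k)
    {x : Fin n → ℝ} (hx : ∀ i, 0 ≤ x i) {τ : Fin n → ℕ} (hτ : Function.Injective τ) :
    ∑ i, w (τ i) * x i ≤ ∑ i, w (rankAll x i) * x i := by
  set N := n + 1 + ∑ i, τ i with hN
  have hτN : ∀ i, τ i < N := by
    intro i
    have : τ i ≤ ∑ j, τ j := Finset.single_le_sum (fun j _ => Nat.zero_le _) (Finset.mem_univ i)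
    omega
  have hrN : ∀ i, rankAll x i < N := fun i => lt_of_lt_of_le (rankAll_lt_n x i) (by omega)
  rw [sum_mul_expand w x τ hτN, sum_mul_expand w x (rankAll x) hrN]
  apply add_le_add le_rfl
  apply Finset.sum_le_sum
  intro m _
  apply mul_le_mul_of_nonneg_left (level_sum_le hx hτ m)
  exact sub_nonneg.2 (hw (Nat.le_succ m))

lemma sorted_le_scaled {w : ℕ → ℝ} (hw : Antitone w) (hw0 : ∀ k, 0 ≤ w k)
    {c : ℝ} (hc : 0 ≤ c) {x y : Fin n → ℝ} (hx : ∀ i, 0 ≤ x i) (hy : ∀ i, 0 ≤ y i)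
    (hxy : ∀ i, x i ≤ c * y i) :
    ∑ i, w (rankAll x i) * x i ≤ c * ∑ i, w (rankAll y i) * y i := by
  calc ∑ i, w (rankAll x i) * x i
      ≤ ∑ i, w (rankAll x i) * (c * y i) := Finset.sum_le_sum fun i _ =>
        mul_le_mul_of_nonneg_left (hxy i) (hw0 _)
    _ = c * ∑ i, w (rankAll x i) * y i := by
        rw [Finset.mul_sum]
        exact Finset.sum_congr rfl fun i _ => by ring
    _ ≤ c * ∑ i, w (rankAll y i) * y i :=
        mul_le_mul_of_nonneg_left (rearrange_le hw hw0 hy (rankAll_injective x)) hc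

end Rearrangement

section Helpers

variable {Q S : Type*} [Fintype Q] [Fintype S]

lemma kwVal_nonneg (P : Q → ℝ) (pi : Q → S → ℝ) (vq : Q → ℝ)
    (hP0 : ∀ q, 0 ≤ P q) (hpi0 : ∀ q s, 0 ≤ pi q s) (hvq : ∀ q, 0 ≤ vq q) (s : S) :
    0 ≤ kwVal P pi vq s := by
  apply div_nonneg
  · exact Finset.sum_nonneg fun q _ => mul_nonneg (mul_nonneg (hpi0 q s) (hvq q)) (hP0 q)
  · exact Finset.sum_nonneg fun q _ => mul_nonneg (hpi0 q s) (hP0 q)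

lemma mass_mul_kwVal (P : Q → ℝ) (pi : Q → S → ℝ) (vq : Q → ℝ)
    (hP0 : ∀ q, 0 ≤ P q) (hpi0 : ∀ q s, 0 ≤ pi q s) (s : S) :
    mass P pi s * kwVal P pi vq s = ∑ q, pi q s * vq q * P q := by
  by_cases hd : (∑ q, pi q s * P q) = 0
  · have hz : ∀ q ∈ Finset.univ, pi q s * P q = 0 :=
      (Finset.sum_eq_zero_iff_of_nonneg
        (fun q _ => mul_nonneg (hpi0 q s) (hP0 q))).1 hd
    have : ∀ q ∈ Finset.univ, pi q s * vq q * P q = 0 := by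
      intro q hq
      have h := hz q hq
      calc pi q s * vq q * P q = vq q * (pi q s * P q) := by ring
        _ = 0 := by rw [h, mul_zero]
    rw [Finset.sum_eq_zero this, mass, hd, zero_mul]
  · rw [kwVal, mass, mul_comm, div_mul_cancel₀ _ hd]

end Helpers

end PBM

open PBM in
/-- if the auction system is `c`-expected-homogeneous, the
expected optimal welfare is at most `c` times the expected welfare of the
truthful keyword-bid profile `𝔳`. -/
theorem stmt7
    {Q S : Type*} [Fintype Q] [Fintype S] {n : ℕ}
    (P : Q → ℝ) (pi : Q → S → ℝ) (w : ℕ → ℝ)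
    (hP0 : ∀ q, 0 ≤ P q) (hP1 : ∑ q, P q = 1)
    (hpi0 : ∀ q s, 0 ≤ pi q s) (hpi1 : ∀ q, ∑ s, pi q s = 1)
    (hS : ∀ s : S, ∃ q, 0 < pi q s)
    (hw : Antitone w) (hw0 : ∀ k, 0 ≤ w k)
    (c : ℝ) (hc : 0 ≤ c)
    {Ω : Type*} [MeasurableSpace Ω] (μ : Measure Ω) [IsProbabilityMeasure μ]
    (Vf : Ω → Fin n → Q → ℝ) (hV0 : ∀ ω i q, 0 ≤ Vf ω i q)
    (hhom : ∀ (i : Fin n) (s : S) (q₁ q₂ : Q), 0 < pi q₁ s → 0 < pi q₂ s →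
      ∀ᵐ ω ∂μ, Vf ω i q₁ ≤ c * ∫ ω', Vf ω' i q₂ ∂μ)
    (hIntOpt : Integrable (fun ω => SWopt P w (Vf ω)) μ)
    (hIntTr : Integrable (fun ω => SWtruth P pi w (Vf ω)) μ) :
    ∫ ω, SWopt P w (Vf ω) ∂μ ≤ c * ∫ ω, SWtruth P pi w (Vf ω) ∂μ := by

  classical
  have hexs : ∀ q : Q, ∃ s, 0 < pi q s := by
    intro q
    by_contra h
    push_neg at h
    have h0 : ∑ s, pi q s = 0 :=
      Finset.sum_eq_zero fun s _ => le_antisymm (h s) (hpi0 q s)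
    rw [hpi1 q] at h0
    norm_num at h0
  have hVint : ∀ (i : Fin n) (q : Q), Integrable (fun ω => Vf ω i q) μ := by
    intro i q
    obtain ⟨s, hs⟩ := hexs q
    have hb := hhom i s q q hs hs
    by_cases hm : AEStronglyMeasurable (fun ω => Vf ω i q) μ
    · refine ⟨hm, ?_⟩
      apply MeasureTheory.HasFiniteIntegral.of_bounded (C := c * ∫ ω', Vf ω' i q ∂μ)
      filter_upwards [hb] with ω h
      rwa [Real.norm_of_nonneg (hV0 ω i q)]
    · exfalso
      apply hm
      have h0 : (∫ ω', Vf ω' i q ∂μ) = 0 := integral_non_aestronglyMeasurable hm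
      rw [h0, mul_zero] at hb
      have hz : (fun ω => Vf ω i q) =ᵐ[μ] (fun _ => (0 : ℝ)) := by
        filter_upwards [hb] with ω h
        exact le_antisymm h (hV0 ω i q)
      exact aestronglyMeasurable_const.congr hz.symm
  set mm : Fin n → Q → ℝ := fun i q => ∫ ω, Vf ω i q ∂μ with hmm_def
  have hm0 : ∀ i q, 0 ≤ mm i q := fun i q => integral_nonneg fun ω => hV0 ω i q
  have hAE : ∀ᵐ ω ∂μ, ∀ (i : Fin n) (q : Q) (s : S) (q' : Q),
      0 < pi q s → 0 < pi q' s → Vf ω i q ≤ c * mm i q' := by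
    rw [MeasureTheory.ae_all_iff]
    intro i
    rw [MeasureTheory.ae_all_iff]
    intro q
    rw [MeasureTheory.ae_all_iff]
    intro s
    rw [MeasureTheory.ae_all_iff]
    intro q'
    by_cases h1 : 0 < pi q s
    · by_cases h2 : 0 < pi q' s
      · filter_upwards [hhom i s q q' h1 h2] with ω h
        exact fun _ _ => h
      · exact Filter.Eventually.of_forall fun ω _ h2' => absurd h2' h2
    · exact Filter.Eventually.of_forall fun ω h1' _ => absurd h1' h1
  set u : S → Fin n → ℝ := fun s i => kwVal P pi (mm i) s with hu_def
  have hu0 : ∀ s i, 0 ≤ u s i := fun s i =>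
    kwVal_nonneg P pi (mm i) hP0 hpi0 (hm0 i) s
  set K : ℝ := ∑ s, mass P pi s * ∑ i, w (rankAll (u s) i) * u s i with hK_def
  have hmass0 : ∀ s, 0 ≤ mass P pi s := fun s =>
    Finset.sum_nonneg fun q _ => mul_nonneg (hpi0 q s) (hP0 q)
  -- Step A : a.e. bound on SWopt
  have hA : ∀ᵐ ω ∂μ, SWopt P w (Vf ω) ≤ c * K := by
    filter_upwards [hAE] with ω hω
    have e1 : SWopt P w (Vf ω) = ∑ q, ∑ s, (pi q s * P q) *
        ∑ i, w (rankAll (fun j => Vf ω j q) i) * Vf ω i q := by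
      simp only [SWopt]
      refine Finset.sum_congr rfl fun q _ => ?_
      have h2 : ∑ s, (pi q s * P q) *
          (∑ i, w (rankAll (fun j => Vf ω j q) i) * Vf ω i q)
          = (∑ s, pi q s) * (P q * ∑ i, w (rankAll (fun j => Vf ω j q) i) * Vf ω i q) := by
        rw [Finset.sum_mul]
        exact Finset.sum_congr rfl fun s _ => by ring
      rw [h2, hpi1, one_mul]
    have e2 : c * K = ∑ q, ∑ s, (pi q s * P q) *
        (c * ∑ i, w (rankAll (u s) i) * u s i) := by
      rw [hK_def, Finset.mul_sum, Finset.sum_comm]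
      refine Finset.sum_congr rfl fun s _ => ?_
      calc c * (mass P pi s * ∑ i, w (rankAll (u s) i) * u s i)
          = (∑ q, pi q s * P q) * (c * ∑ i, w (rankAll (u s) i) * u s i) := by
            simp only [mass]; ring
        _ = ∑ q, (pi q s * P q) * (c * ∑ i, w (rankAll (u s) i) * u s i) := by
            rw [Finset.sum_mul]
    rw [e1, e2]
    apply Finset.sum_le_sum
    intro q _
    apply Finset.sum_le_sum
    intro s _
    rcases (mul_nonneg (hpi0 q s) (hP0 q)).eq_or_lt with hz | hz
    · rw [← hz, zero_mul, zero_mul]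
    · have hpis : 0 < pi q s := by
        rcases (hpi0 q s).eq_or_lt with h | h
        · exfalso; rw [← h, zero_mul] at hz; exact lt_irrefl _ hz
        · exact h
      apply mul_le_mul_of_nonneg_left _ hz.le
      have hmass : 0 < mass P pi s := by
        have hle : pi q s * P q ≤ mass P pi s :=
          Finset.single_le_sum (f := fun q' => pi q' s * P q')
            (fun q' _ => mul_nonneg (hpi0 q' s) (hP0 q')) (Finset.mem_univ q)
        exact lt_of_lt_of_le hz hle
      have hkey : ∀ i, Vf ω i q ≤ c * u s i := by
        intro i
        have hnum : Vf ω i q * mass P pi s ≤ c * ∑ q', pi q' s * mm i q' * P q' := by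
          simp only [mass]
          rw [Finset.mul_sum, Finset.mul_sum]
          apply Finset.sum_le_sum
          intro q' _
          rcases (hpi0 q' s).eq_or_lt with h' | h'
          · rw [← h']; simp
          · calc Vf ω i q * (pi q' s * P q')
                ≤ (c * mm i q') * (pi q' s * P q') :=
                  mul_le_mul_of_nonneg_right (hω i q s q' hpis h')
                    (mul_nonneg h'.le (hP0 q'))
              _ = c * (pi q' s * mm i q' * P q') := by ring
        have hdiv : Vf ω i q ≤ (c * ∑ q', pi q' s * mm i q' * P q') / mass P pi s := by
          rw [le_div_iff₀ hmass]
          exact hnum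
        calc Vf ω i q ≤ (c * ∑ q', pi q' s * mm i q' * P q') / mass P pi s := hdiv
          _ = c * ((∑ q', pi q' s * mm i q' * P q') / (∑ q', pi q' s * P q')) := by
              simp only [mass]; rw [mul_div_assoc]
          _ = c * u s i := by simp only [hu_def, kwVal]
      exact sorted_le_scaled hw hw0 hc (fun i => hV0 ω i q) (hu0 s) hkey
  have hIOpt : ∫ ω, SWopt P w (Vf ω) ∂μ ≤ c * K := by
    calc ∫ ω, SWopt P w (Vf ω) ∂μ ≤ ∫ _ω, c * K ∂μ :=
        integral_mono_ae hIntOpt (integrable_const _) hA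
      _ = c * K := by simp
  -- Step B : K ≤ ∫ SWtruth
  set L : Ω → ℝ := fun ω => ∑ s, ∑ i, ∑ q,
      (w (rankAll (u s) i) * (pi q s * P q)) * Vf ω i q with hL_def
  have hLint : Integrable L μ := by
    rw [hL_def]
    apply integrable_finset_sum
    intro s _
    apply integrable_finset_sum
    intro i _
    apply integrable_finset_sum
    intro q _
    exact (hVint i q).const_mul _
  have hLval : ∫ ω, L ω ∂μ = ∑ s, ∑ i, ∑ q,
      (w (rankAll (u s) i) * (pi q s * P q)) * mm i q := by
    simp only [hL_def]
    rw [integral_finset_sum _ (fun s _ => integrable_finset_sum _ fun i _ =>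
      integrable_finset_sum _ fun q _ => (hVint i q).const_mul _)]
    refine Finset.sum_congr rfl fun s _ => ?_
    rw [integral_finset_sum _ (fun i _ =>
      integrable_finset_sum _ fun q _ => (hVint i q).const_mul _)]
    refine Finset.sum_congr rfl fun i _ => ?_
    rw [integral_finset_sum _ (fun q _ => (hVint i q).const_mul _)]
    refine Finset.sum_congr rfl fun q _ => ?_
    exact integral_const_mul _ _
  have hKeq : K = ∑ s, ∑ i, ∑ q, (w (rankAll (u s) i) * (pi q s * P q)) * mm i q := by
    rw [hK_def]
    refine Finset.sum_congr rfl fun s _ => ?_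
    rw [Finset.mul_sum]
    refine Finset.sum_congr rfl fun i _ => ?_
    have h1 : mass P pi s * kwVal P pi (mm i) s = ∑ q, pi q s * mm i q * P q :=
      mass_mul_kwVal P pi (mm i) hP0 hpi0 s
    calc mass P pi s * (w (rankAll (u s) i) * u s i)
        = w (rankAll (u s) i) * (mass P pi s * kwVal P pi (mm i) s) := by
          simp only [hu_def]; ring
      _ = w (rankAll (u s) i) * ∑ q, pi q s * mm i q * P q := by rw [h1]
      _ = ∑ q, (w (rankAll (u s) i) * (pi q s * P q)) * mm i q := by
          rw [Finset.mul_sum]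
          exact Finset.sum_congr rfl fun q _ => by ring
  have hLle : ∀ ω, L ω ≤ SWtruth P pi w (Vf ω) := by
    intro ω
    have eT : SWtruth P pi w (Vf ω) = ∑ s, mass P pi s *
        ∑ i, w (rankAll (fun j => kwVal P pi (Vf ω j) s) i) * kwVal P pi (Vf ω i) s := by
      simp only [SWtruth]
      calc ∑ q, P q * ∑ s, pi q s *
            ∑ i, w (rankAll (fun j => kwVal P pi (Vf ω j) s) i) * kwVal P pi (Vf ω i) s
          = ∑ q, ∑ s, P q * (pi q s *
            ∑ i, w (rankAll (fun j => kwVal P pi (Vf ω j) s) i) * kwVal P pi (Vf ω i) s) := by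
            exact Finset.sum_congr rfl fun q _ => by rw [Finset.mul_sum]
        _ = ∑ s, ∑ q, P q * (pi q s *
            ∑ i, w (rankAll (fun j => kwVal P pi (Vf ω j) s) i) * kwVal P pi (Vf ω i) s) :=
            Finset.sum_comm
        _ = ∑ s, mass P pi s *
            ∑ i, w (rankAll (fun j => kwVal P pi (Vf ω j) s) i) * kwVal P pi (Vf ω i) s := by
            refine Finset.sum_congr rfl fun s _ => ?_
            simp only [mass]
            rw [Finset.sum_mul]
            exact Finset.sum_congr rfl fun q _ => by ring
    have eL : L ω = ∑ s, mass P pi s *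
        ∑ i, w (rankAll (u s) i) * kwVal P pi (Vf ω i) s := by
      simp only [hL_def]
      refine Finset.sum_congr rfl fun s _ => ?_
      rw [Finset.mul_sum]
      refine Finset.sum_congr rfl fun i _ => ?_
      have h1 : mass P pi s * kwVal P pi (Vf ω i) s = ∑ q, pi q s * Vf ω i q * P q :=
        mass_mul_kwVal P pi (Vf ω i) hP0 hpi0 s
      calc ∑ q, (w (rankAll (u s) i) * (pi q s * P q)) * Vf ω i q
          = w (rankAll (u s) i) * ∑ q, pi q s * Vf ω i q * P q := by
            rw [Finset.mul_sum]
            exact Finset.sum_congr rfl fun q _ => by ring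
        _ = mass P pi s * (w (rankAll (u s) i) * kwVal P pi (Vf ω i) s) := by
            rw [← h1]; ring
    rw [eL, eT]
    apply Finset.sum_le_sum
    intro s _
    apply mul_le_mul_of_nonneg_left _ (hmass0 s)
    exact rearrange_le hw hw0
      (fun i => kwVal_nonneg P pi (Vf ω i) hP0 hpi0 (hV0 ω i) s)
      (rankAll_injective (u s))
  have hB : K ≤ ∫ ω, SWtruth P pi w (Vf ω) ∂μ := by
    rw [hKeq, ← hLval]
    exact integral_mono hLint hIntTr hLle
  calc ∫ ω, SWopt P w (Vf ω) ∂μ ≤ c * K := hIOpt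
    _ ≤ c * ∫ ω, SWtruth P pi w (Vf ω) ∂μ := mul_le_mul_of_nonneg_left hB hc
end
end
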